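/- The number of zeros of the interpolated Dirichlet solution does not depend on the auxiliary off-diagonal entry: let c, c' > 0 and let u and u' be the Dirichlet solutions obtained from the choices a(m-1) = c and a(m-1) = c' respectively (so u(n) = u'(n) for 0 ≤ n ≤ m-1, while u(m) and u'(m) may differ), with linear interpolations ũ and ũ'. Then the sets {x ∈ (0,m) : ũ(x) = 0} and {x ∈ (0,m) : ũ'(x) = 0} have the same cardinality. -/

import Mathlib

/-- On a unit segment with opposite-sign endpoints, the linear interpolation has a
unique zero at `t = A / (A - B)`. -/
lemma seg_zero_iff (A B : ℝ) (hAB : A * B < 0) (t : ℝ) :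
    ((0 < t ∧ t < 1) ∧ (1 - t) * A + t * B = 0) ↔ t = A / (A - B) := by
  have hd : A - B ≠ 0 := by
    intro h
    have : A = B := by linarith
    rw [this] at hAB; nlinarith [sq_nonneg B]
  constructor
  · rintro ⟨-, heq⟩
    rw [eq_div_iff hd]
    linarith [heq]
  · rintro rfl
    refine ⟨⟨?_, ?_⟩, ?_⟩
    · rcases mul_neg_iff.mp hAB with ⟨h1, h2⟩ | ⟨h1, h2⟩
      · exact div_pos h1 (by linarith)
      · exact div_pos_iff.mpr (Or.inr ⟨h1, by linarith⟩)
    · rcases mul_neg_iff.mp hAB with ⟨h1, h2⟩ | ⟨h1, h2⟩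
      · rw [div_lt_one (by linarith)]; linarith
      · have hd' : A - B < 0 := by linarith
        rw [div_lt_one_iff]; exact Or.inr (Or.inr ⟨hd', by linarith⟩)
    · field_simp
      ring

/-- If the endpoints do not have strictly opposite signs (and are not both zero), the
linear interpolation has no zero in the open segment. -/
lemma seg_no_zero (A B : ℝ) (hAB : ¬ A * B < 0) (hne : ¬ (A = 0 ∧ B = 0))
    (t : ℝ) (ht : 0 < t) (ht1 : t < 1) : (1 - t) * A + t * B ≠ 0 := by
  intro heq
  by_cases hA : A = 0
  · have hB : B = 0 := by
      have : t * B = 0 := by rw [hA] at heq; linarith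
      rcases mul_eq_zero.mp this with h | h
      · exact absurd h (ne_of_gt ht)
      · exact h
    exact hne ⟨hA, hB⟩
  · apply hAB
    have h1 : t * (A * B) = -((1 - t) * A ^ 2) := by linear_combination A * heq
    have h2 : 0 < A ^ 2 := by positivity
    nlinarith

/-- The number of zeros of the interpolated Dirichlet solution in `(0, m)` does not
depend on the auxiliary off-diagonal entry `a (m-1)`: if `u` and `u'` are the Dirichlet
solutions obtained from the choices `a (m-1) = c` and `a (m-1) = c'` respectively
(`c, c' > 0`), with linear interpolations `v` and `v'`, then the zero sets of `v` and
`v'` in `(0, m)` have the same cardinality. -/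
theorem interpolated_zero_count_independent_of_auxiliary_entry
    (m : ℕ) (hm : 1 ≤ m) (E : ℝ) (a b : ℕ → ℝ)
    (ha : ∀ n, n ≤ m - 2 → 0 < a n)
    (c c' : ℝ) (hc : 0 < c) (hc' : 0 < c')
    (u u' : ℕ → ℝ) (hu0 : u 0 = 1) (hu'0 : u' 0 = 1)
    (hurec : ∀ n, n < m → (if n = m - 1 then c else a n) * u (n + 1) =
      (E - b n) * u n - (if n = 0 then 0 else a (n - 1) * u (n - 1)))
    (hu'rec : ∀ n, n < m → (if n = m - 1 then c' else a n) * u' (n + 1) =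
      (E - b n) * u' n - (if n = 0 then 0 else a (n - 1) * u' (n - 1)))
    (v v' : ℝ → ℝ)
    (hv : ∀ x : ℝ, 0 ≤ x → x < (m : ℝ) →
      v x = (1 - (x - (⌊x⌋ : ℝ))) * u ⌊x⌋.toNat + (x - (⌊x⌋ : ℝ)) * u (⌊x⌋.toNat + 1))
    (hvm : v (m : ℝ) = u m)
    (hv' : ∀ x : ℝ, 0 ≤ x → x < (m : ℝ) →
      v' x = (1 - (x - (⌊x⌋ : ℝ))) * u' ⌊x⌋.toNat + (x - (⌊x⌋ : ℝ)) * u' (⌊x⌋.toNat + 1))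
    (hv'm : v' (m : ℝ) = u' m) :
    {x : ℝ | 0 < x ∧ x < (m : ℝ) ∧ v x = 0}.ncard =
      {x : ℝ | 0 < x ∧ x < (m : ℝ) ∧ v' x = 0}.ncard := by
  -- `u` and `u'` agree up to index `m - 1`
  have hEq : ∀ n, n ≤ m - 1 → u n = u' n := by
    intro n
    induction n using Nat.strong_induction_on with
    | _ n ih =>
      match n with
      | 0 => intro _; rw [hu0, hu'0]
      | (k+1) =>
        intro hn
        have hkm : k < m := by omega
        have hne : k ≠ m - 1 := by omega
        have h1 := hurec k hkm
        have h2 := hu'rec k hkm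
        rw [if_neg hne] at h1 h2
        have hak : a k ≠ 0 := ne_of_gt (ha k (by omega))
        have e1 : u k = u' k := ih k (by omega) (by omega)
        have e2 : (if k = 0 then (0:ℝ) else a (k-1) * u (k-1)) =
            (if k = 0 then (0:ℝ) else a (k-1) * u' (k-1)) := by
          by_cases hk0 : k = 0
          · simp [hk0]
          · rw [if_neg hk0, if_neg hk0, ih (k-1) (by omega) (by omega)]
        apply mul_left_cancel₀ hak
        rw [h1, h2, e1, e2]
  -- consecutive values of `u` are never both zero
  have hnotboth : ∀ k, k ≤ m - 1 → ¬ (u k = 0 ∧ u (k+1) = 0) := by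
    intro k
    induction k with
    | zero => intro _ h; rw [hu0] at h; exact one_ne_zero h.1
    | succ j ih =>
      intro hk h
      have hjm : j + 1 < m := by omega
      have h1 := hurec (j+1) hjm
      rw [if_neg (by omega : j + 1 ≠ 0), h.1, h.2] at h1
      have hj : u j = 0 := by
        have haj : a j ≠ 0 := ne_of_gt (ha j (by omega))
        have : a j * u j = 0 := by simpa using h1
        rcases mul_eq_zero.mp this with h' | h'
        · exact absurd h' haj
        · exact h'
      exact ih (by omega) ⟨hj, h.1⟩
  have hm1 : ((m:ℝ) - 1) < m := by norm_num
  have hm1' : (0:ℝ) ≤ (m:ℝ) - 1 := by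
    have : (1:ℝ) ≤ m := by exact_mod_cast hm
    linarith
  -- the last values are proportional: c * u m = c' * u' m
  have hcc : c * u m = c' * u' m := by
    have h1 := hurec (m-1) (by omega)
    have h2 := hu'rec (m-1) (by omega)
    rw [if_pos rfl] at h1 h2
    rw [show m - 1 + 1 = m from by omega] at h1 h2
    rw [h1, h2, hEq (m-1) le_rfl]
    congr 1
    by_cases h0 : m - 1 = 0
    · rw [if_pos h0, if_pos h0]
    · rw [if_neg h0, if_neg h0, hEq (m-1-1) (by omega)]
  set A := u (m-1) with hA
  set B := u m with hB
  set B' := u' m with hB'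
  have hA' : u' (m-1) = A := (hEq (m-1) le_rfl).symm
  have hABne : ¬ (A = 0 ∧ B = 0) := by
    have := hnotboth (m-1) le_rfl
    rwa [show m - 1 + 1 = m from by omega] at this
  have hAB'ne : ¬ (A = 0 ∧ B' = 0) := by
    rintro ⟨h1, h2⟩
    apply hABne
    refine ⟨h1, ?_⟩
    have : c * B = 0 := by rw [hcc, h2, mul_zero]
    rcases mul_eq_zero.mp this with h | h
    · exact absurd h (ne_of_gt hc)
    · exact h
  have hsign : A * B < 0 ↔ A * B' < 0 := by
    have key : c * (A * B) = c' * (A * B') := by linear_combination A * hcc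
    constructor
    · intro h; nlinarith
    · intro h; nlinarith
  -- floor computations on the last interval
  have hfloor : ∀ x : ℝ, (m:ℝ) - 1 < x → x < m → ⌊x⌋ = (m:ℤ) - 1 := by
    intro x h1 h2
    rw [Int.floor_eq_iff]
    constructor
    · push_cast; linarith
    · push_cast; linarith
  have htoNat : ((m:ℤ) - 1).toNat = m - 1 := by omega
  have hcast : ((m - 1 : ℕ) : ℝ) = (m:ℝ) - 1 := by
    push_cast [hm]; ring
  -- value of v, v' on the last interval
  have hvlast : ∀ x : ℝ, (m:ℝ) - 1 < x → x < m →
      v x = (1 - (x - ((m:ℝ) - 1))) * A + (x - ((m:ℝ) - 1)) * B := by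
    intro x h1 h2
    rw [hv x (by linarith) h2, hfloor x h1 h2, htoNat,
      show m - 1 + 1 = m from by omega]
    push_cast [hm]
    ring_nf
    rw [hA, hB]
  have hv'last : ∀ x : ℝ, (m:ℝ) - 1 < x → x < m →
      v' x = (1 - (x - ((m:ℝ) - 1))) * A + (x - ((m:ℝ) - 1)) * B' := by
    intro x h1 h2
    rw [hv' x (by linarith) h2, hfloor x h1 h2, htoNat,
      show m - 1 + 1 = m from by omega, hA']
    push_cast [hm]
    ring_nf
    rw [hB']
  -- v = v' on (0, m-1]
  have hvv' : ∀ x : ℝ, 0 < x → x ≤ (m:ℝ) - 1 → v x = v' x := by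
    intro x hx0 hx1
    have hxm : x < m := lt_of_le_of_lt hx1 hm1
    rw [hv x (le_of_lt hx0) hxm, hv' x (le_of_lt hx0) hxm]
    have hf0 : (0:ℤ) ≤ ⌊x⌋ := Int.floor_nonneg.mpr (le_of_lt hx0)
    rcases lt_or_eq_of_le hx1 with hlt | heq
    · have hfl : (⌊x⌋ : ℝ) < (m:ℝ) - 1 := lt_of_le_of_lt (Int.floor_le x) hlt
      have hfl2 : ⌊x⌋ < (m:ℤ) - 1 := by exact_mod_cast hfl
      have h1 : ⌊x⌋.toNat ≤ m - 1 := by omega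
      have h2 : ⌊x⌋.toNat + 1 ≤ m - 1 := by omega
      rw [hEq _ h1, hEq _ h2]
    · subst heq
      have hfl : ⌊(m:ℝ) - 1⌋ = (m:ℤ) - 1 := by
        rw [← hcast, Int.floor_natCast]; omega
      rw [hfl, htoNat, hEq (m-1) le_rfl]
      have hx : (m:ℝ) - 1 - (((m:ℤ) - 1 : ℤ) : ℝ) = 0 := by push_cast; ring
      rw [hx]; ring
  -- on each unit interval, the zero set of v is a subsingleton
  have hpiece : ∀ k : ℕ, k < m →
      {x : ℝ | (k:ℝ) ≤ x ∧ x < (k:ℝ) + 1 ∧ v x = 0}.Subsingleton := by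
    intro k hk
    have hval : ∀ x : ℝ, (k:ℝ) ≤ x → x < (k:ℝ) + 1 →
        v x = u k + (x - k) * (u (k+1) - u k) := by
      intro x h1 h2
      have hkm : ((k:ℝ) + 1) ≤ m := by exact_mod_cast hk
      have hxm : x < m := lt_of_lt_of_le h2 hkm
      have hfl : ⌊x⌋ = (k:ℤ) := by
        rw [Int.floor_eq_iff]
        constructor
        · push_cast; linarith
        · push_cast; linarith
      rw [hv x (le_trans (by positivity) h1) hxm, hfl]
      simp only [Int.toNat_natCast, Int.cast_natCast]
      ring
    intro x hx y hy
    obtain ⟨hx1, hx2, hx3⟩ := hx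
    obtain ⟨hy1, hy2, hy3⟩ := hy
    rw [hval x hx1 hx2] at hx3
    rw [hval y hy1 hy2] at hy3
    by_cases hd : u (k+1) - u k = 0
    · exfalso
      apply hnotboth k (by omega)
      have huk : u k = 0 := by rw [hd, mul_zero] at hx3; linarith
      exact ⟨huk, by linarith⟩
    · have : (x - y) * (u (k+1) - u k) = 0 := by linarith [hx3, hy3]
      rcases mul_eq_zero.mp this with h | h
      · linarith [h]
      · exact absurd h hd
  -- finiteness of the full zero set of v in [0, m)
  have hSfin : {x : ℝ | 0 ≤ x ∧ x < (m:ℝ) ∧ v x = 0}.Finite := by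
    have hsub : {x : ℝ | 0 ≤ x ∧ x < (m:ℝ) ∧ v x = 0} ⊆
        ⋃ k ∈ Finset.range m, {x : ℝ | (k:ℝ) ≤ x ∧ x < (k:ℝ) + 1 ∧ v x = 0} := by
      rintro x ⟨hx0, hxm, hxv⟩
      have hf0 : (0:ℤ) ≤ ⌊x⌋ := Int.floor_nonneg.mpr hx0
      have hfle : (⌊x⌋:ℝ) ≤ x := Int.floor_le x
      have hflt : ⌊x⌋ < (m:ℤ) := by
        have : (⌊x⌋:ℝ) < m := lt_of_le_of_lt hfle hxm
        exact_mod_cast this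
      refine Set.mem_iUnion₂.mpr ⟨⌊x⌋.toNat, Finset.mem_range.mpr (by omega), ?_, ?_, hxv⟩
      · rw [show ((⌊x⌋.toNat : ℕ) : ℝ) = (⌊x⌋ : ℝ) by exact_mod_cast Int.toNat_of_nonneg hf0]
        exact hfle
      · rw [show ((⌊x⌋.toNat : ℕ) : ℝ) = (⌊x⌋ : ℝ) by exact_mod_cast Int.toNat_of_nonneg hf0]
        linarith [Int.lt_floor_add_one x]
    exact Set.Finite.subset (Set.Finite.biUnion (Finset.range m).finite_toSet
      (fun k hk => Set.Subsingleton.finite (hpiece k (Finset.mem_range.mp hk)))) hsub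
  -- the common part of the two zero sets
  set S₀ : Set ℝ := {x : ℝ | 0 < x ∧ x ≤ (m:ℝ) - 1 ∧ v x = 0} with hS₀
  have hS₀fin : S₀.Finite := by
    apply hSfin.subset
    rintro x ⟨h1, h2, h3⟩
    exact ⟨le_of_lt h1, lt_of_le_of_lt h2 hm1, h3⟩
  by_cases hs : A * B < 0
  · -- one extra zero in the last interval, on both sides
    have hs' : A * B' < 0 := hsign.mp hs
    set p := (m:ℝ) - 1 + A / (A - B) with hp
    set p' := (m:ℝ) - 1 + A / (A - B') with hp'
    obtain ⟨⟨k1, k2⟩, k3⟩ := (seg_zero_iff A B hs (A/(A-B))).mpr rfl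
    obtain ⟨⟨k1', k2'⟩, k3'⟩ := (seg_zero_iff A B' hs' (A/(A-B'))).mpr rfl
    have hSv : {x : ℝ | 0 < x ∧ x < (m:ℝ) ∧ v x = 0} = insert p S₀ := by
      ext x
      simp only [Set.mem_setOf_eq, Set.mem_insert_iff, hS₀]
      constructor
      · rintro ⟨h1, h2, h3⟩
        by_cases hx : x ≤ (m:ℝ) - 1
        · exact Or.inr ⟨h1, hx, h3⟩
        · push_neg at hx
          left
          rw [hvlast x hx h2] at h3
          have key := (seg_zero_iff A B hs (x - ((m:ℝ)-1))).mp
            ⟨⟨by linarith, by linarith⟩, h3⟩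
          rw [hp]; linarith [key]
      · rintro (rfl | ⟨h1, h2, h3⟩)
        · refine ⟨by rw [hp]; linarith, by rw [hp]; linarith, ?_⟩
          rw [hvlast p (by rw [hp]; linarith) (by rw [hp]; linarith)]
          have hpt : p - ((m:ℝ)-1) = A/(A-B) := by rw [hp]; ring
          rw [hpt]; exact k3
        · exact ⟨h1, lt_of_le_of_lt h2 hm1, h3⟩
    have hSv' : {x : ℝ | 0 < x ∧ x < (m:ℝ) ∧ v' x = 0} = insert p' S₀ := by
      ext x
      simp only [Set.mem_setOf_eq, Set.mem_insert_iff, hS₀]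
      constructor
      · rintro ⟨h1, h2, h3⟩
        by_cases hx : x ≤ (m:ℝ) - 1
        · exact Or.inr ⟨h1, hx, by rw [hvv' x h1 hx]; exact h3⟩
        · push_neg at hx
          left
          rw [hv'last x hx h2] at h3
          have key := (seg_zero_iff A B' hs' (x - ((m:ℝ)-1))).mp
            ⟨⟨by linarith, by linarith⟩, h3⟩
          rw [hp']; linarith [key]
      · rintro (rfl | ⟨h1, h2, h3⟩)
        · refine ⟨by rw [hp']; linarith, by rw [hp']; linarith, ?_⟩
          rw [hv'last p' (by rw [hp']; linarith) (by rw [hp']; linarith)]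
          have hpt : p' - ((m:ℝ)-1) = A/(A-B') := by rw [hp']; ring
          rw [hpt]; exact k3'
        · refine ⟨h1, lt_of_le_of_lt h2 hm1, ?_⟩
          rw [← hvv' x h1 h2]; exact h3
    have hpnot : p ∉ S₀ := by
      rintro ⟨h1, h2, h3⟩
      rw [hp] at h2; linarith
    have hp'not : p' ∉ S₀ := by
      rintro ⟨h1, h2, h3⟩
      rw [hp'] at h2; linarith
    rw [hSv, hSv', Set.ncard_insert_of_notMem hpnot hS₀fin,
      Set.ncard_insert_of_notMem hp'not hS₀fin]
  · -- no zero in the last open interval, on both sides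
    have hs' : ¬ A * B' < 0 := fun h => hs (hsign.mpr h)
    have hSv : {x : ℝ | 0 < x ∧ x < (m:ℝ) ∧ v x = 0} = S₀ := by
      ext x
      simp only [Set.mem_setOf_eq, hS₀]
      constructor
      · rintro ⟨h1, h2, h3⟩
        refine ⟨h1, ?_, h3⟩
        by_contra hx
        push_neg at hx
        rw [hvlast x hx h2] at h3
        exact seg_no_zero A B hs hABne (x - ((m:ℝ)-1)) (by linarith) (by linarith) h3
      · rintro ⟨h1, h2, h3⟩
        exact ⟨h1, lt_of_le_of_lt h2 hm1, h3⟩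
    have hSv' : {x : ℝ | 0 < x ∧ x < (m:ℝ) ∧ v' x = 0} = S₀ := by
      ext x
      simp only [Set.mem_setOf_eq, hS₀]
      constructor
      · rintro ⟨h1, h2, h3⟩
        have hx : x ≤ (m:ℝ) - 1 := by
          by_contra hx
          push_neg at hx
          rw [hv'last x hx h2] at h3
          exact seg_no_zero A B' hs' hAB'ne (x - ((m:ℝ)-1)) (by linarith) (by linarith) h3
        exact ⟨h1, hx, by rw [hvv' x h1 hx]; exact h3⟩
      · rintro ⟨h1, h2, h3⟩
        refine ⟨h1, lt_of_le_of_lt h2 hm1, ?_⟩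
        rw [← hvv' x h1 h2]; exact h3
    rw [hSv, hSv']
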